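/- There exists a Borel set S ⊆ [0,1]^ℕ of full measure with respect to the infinite product of Lebesgue measure such that for any two points x = (x_1, x_2, …) and y = (y_1, y_2, …) in S, if for all indices i, j one has x_i < x_j ⟺ y_i < y_j, then x = y. (Almost every point of the infinite-dimensional cube is uniquely determined by the list of all pairwise inequalities between its coordinates.) -/

import Mathlib

open MeasureTheory unitInterval

/-- The infinite product of Lebesgue measures on `[0,1]^ℕ`, characterized as the projective
limit of the finite-dimensional product Lebesgue measures. -/
def IsProductLebesgue (μ : Measure (ℕ → I)) : Prop :=
  IsProjectiveLimit μ (fun J : Finset ℕ => Measure.pi fun _ : J => (volume : Measure I))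

open Filter Topology

namespace ProdLebAux

/-- The indicator random variables: `X q j x` is `1` if `x j < q`, else `0`. -/
noncomputable def X (q : ℝ) (j : ℕ) (x : ℕ → I) : ℝ := if (x j : ℝ) < q then 1 else 0

lemma measurableSet_coord (q : ℝ) : MeasurableSet {t : I | (t : ℝ) < q} :=
  measurable_subtype_coe measurableSet_Iio

lemma measurable_X (q : ℝ) (j : ℕ) : Measurable (X q j) := by
  have hm : Measurable fun x : ℕ → I => (x j : ℝ) :=
    measurable_subtype_coe.comp (measurable_pi_apply j)
  exact Measurable.ite (measurableSet_lt hm measurable_const) measurable_const measurable_const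

lemma volume_coord (q : ℝ) (hq0 : 0 ≤ q) (hq1 : q ≤ 1) :
    (volume : Measure I) {t : I | (t : ℝ) < q} = ENNReal.ofReal q := by
  have h : {t : I | (t : ℝ) < q} = Subtype.val ⁻¹' Set.Iio q := rfl
  rw [h, unitInterval.volume_def, comap_subtype_coe_apply measurableSet_Icc,
    Set.image_preimage_eq_inter_range, Subtype.range_coe]
  have : Set.Iio q ∩ Set.Icc (0:ℝ) 1 = Set.Ico 0 q := by
    ext t
    simp only [Set.mem_inter_iff, Set.mem_Iio, Set.mem_Icc, Set.mem_Ico]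
    constructor
    · rintro ⟨h1, h2, _⟩; exact ⟨h2, h1⟩
    · rintro ⟨h1, h2⟩; exact ⟨h2, h1, le_of_lt (lt_of_lt_of_le h2 hq1)⟩
  rw [this, Real.volume_Ico, sub_zero]

variable {μ : Measure (ℕ → I)}

lemma measure_iInter (hμ : IsProductLebesgue μ) (S : Finset ℕ) (sets : ℕ → Set I)
    (h : ∀ i ∈ S, MeasurableSet (sets i)) :
    μ (⋂ i ∈ S, (fun x : ℕ → I => x i) ⁻¹' sets i) = ∏ i ∈ S, (volume : Measure I) (sets i) := by
  have hset : (⋂ i ∈ S, (fun x : ℕ → I => x i) ⁻¹' sets i)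
      = cylinder S (Set.univ.pi fun i : S => sets i) := by
    ext x
    simp only [Set.mem_iInter, Set.mem_preimage, mem_cylinder, Set.mem_pi, Set.mem_univ,
      true_implies]
    constructor
    · intro hx i
      exact hx i i.2
    · intro hx i hi
      exact hx ⟨i, hi⟩
  rw [hset, IsProjectiveLimit.measure_cylinder hμ S
    (MeasurableSet.univ_pi fun i : S => h i i.2)]
  rw [Measure.pi_pi]
  exact Finset.prod_coe_sort S fun i => (volume : Measure I) (sets i)

lemma measure_coord (hμ : IsProductLebesgue μ) (i : ℕ) {s : Set I} (hs : MeasurableSet s) :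
    μ ((fun x : ℕ → I => x i) ⁻¹' s) = (volume : Measure I) s := by
  have := measure_iInter hμ {i} (fun _ => s) (fun _ _ => hs)
  simpa using this

lemma map_coord (hμ : IsProductLebesgue μ) (i : ℕ) :
    μ.map (fun x : ℕ → I => x i) = (volume : Measure I) := by
  refine Measure.ext fun s hs => ?_
  rw [Measure.map_apply (measurable_pi_apply i) hs]
  exact measure_coord hμ i hs

lemma iIndep_coords (hμ : IsProductLebesgue μ) :
    ProbabilityTheory.iIndepFun
      (fun i (x : ℕ → I) => x i) μ := by
  rw [ProbabilityTheory.iIndepFun_iff_measure_inter_preimage_eq_mul]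
  intro S sets hsets
  rw [measure_iInter hμ S sets hsets]
  exact Finset.prod_congr rfl fun i hi => (measure_coord hμ i (hsets i hi)).symm

lemma isProb (hμ : IsProductLebesgue μ) : IsProbabilityMeasure μ :=
  IsProjectiveLimit.isProbabilityMeasure hμ

/-- The strong law of large numbers applied to the indicators of `x j < q`. -/
lemma slln (hμ : IsProductLebesgue μ) (q : ℝ) (hq0 : 0 ≤ q) (hq1 : q ≤ 1) :
    ∀ᵐ x ∂μ, Tendsto (fun n : ℕ => (∑ j ∈ Finset.range n, X q j x) / n) atTop (𝓝 q) := by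
  have hprob : IsProbabilityMeasure μ := isProb hμ
  have hXind : ∀ j, X q j = fun x : ℕ → I =>
      Set.indicator ((fun x : ℕ → I => x j) ⁻¹' {t : I | (t : ℝ) < q}) (fun _ => (1:ℝ)) x := by
    intro j
    funext x
    simp [X, Set.indicator_apply]
  -- integrability
  have hmeas0 : MeasurableSet ((fun x : ℕ → I => x 0) ⁻¹' {t : I | (t : ℝ) < q}) :=
    (measurable_pi_apply 0) (measurableSet_coord q)
  have hint : Integrable (X q 0) μ := by
    rw [hXind 0]
    exact (integrable_indicator_iff hmeas0).mpr (integrableOn_const (measure_ne_top μ _))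
  -- independence
  have hindep : Pairwise (Function.onFun (ProbabilityTheory.IndepFun · · μ) (X q)) := by
    intro i j hij
    have h := (iIndep_coords hμ).indepFun hij
    have : X q i = (fun t : I => if (t : ℝ) < q then (1:ℝ) else 0) ∘ (fun x : ℕ → I => x i) := rfl
    rw [Function.onFun, this]
    have h2 : X q j = (fun t : I => if (t : ℝ) < q then (1:ℝ) else 0) ∘ (fun x : ℕ → I => x j) :=
      rfl
    rw [h2]
    refine h.comp ?_ ?_ <;>
      exact Measurable.ite (measurableSet_coord q) measurable_const measurable_const
  -- identical distribution
  have hident : ∀ j, ProbabilityTheory.IdentDistrib (X q j) (X q 0) μ μ := by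
    intro j
    refine ⟨(measurable_X q j).aemeasurable, (measurable_X q 0).aemeasurable, ?_⟩
    have hg : Measurable (fun t : I => if (t : ℝ) < q then (1:ℝ) else 0) :=
      Measurable.ite (measurableSet_coord q) measurable_const measurable_const
    have e1 : X q j = (fun t : I => if (t : ℝ) < q then (1:ℝ) else 0) ∘ (fun x : ℕ → I => x j) :=
      rfl
    have e2 : X q 0 = (fun t : I => if (t : ℝ) < q then (1:ℝ) else 0) ∘ (fun x : ℕ → I => x 0) :=
      rfl
    rw [e1, e2, ← Measure.map_map hg (measurable_pi_apply j),
      ← Measure.map_map hg (measurable_pi_apply 0), map_coord hμ j, map_coord hμ 0]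
  have h := ProbabilityTheory.strong_law_ae_real (X q) hint hindep hident
  have hEX : (∫ x, X q 0 x ∂μ) = q := by
    have he : (∫ x, X q 0 x ∂μ)
        = ∫ x, Set.indicator ((fun x : ℕ → I => x 0) ⁻¹' {t : I | (t : ℝ) < q}) 1 x ∂μ := by
      refine integral_congr_ae (ae_of_all _ fun x => ?_)
      simp [X, Set.indicator_apply]
    rw [he, integral_indicator_one hmeas0, measureReal_def,
      measure_coord hμ 0 (measurableSet_coord q), volume_coord q hq0 hq1,
      ENNReal.toReal_ofReal hq0]
  rwa [hEX] at h

end ProdLebAux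

open ProdLebAux

/-- Almost every point of the infinite-dimensional cube is uniquely determined by the list of
all pairwise inequalities between its coordinates: there is a Borel set of full measure on which
"same order relations" implies equality. -/
theorem exists_full_measure_set_order_relations_determine_point
    (μ : Measure (ℕ → I)) (hμ : IsProductLebesgue μ) :
    ∃ S : Set (ℕ → I), MeasurableSet S ∧ μ Sᶜ = 0 ∧
      ∀ x ∈ S, ∀ y ∈ S, (∀ i j : ℕ, x i < x j ↔ y i < y j) → x = y := by
  classical
  set Q : Set ℚ := {q : ℚ | 0 ≤ q ∧ q ≤ 1} with hQ
  set S : Set (ℕ → I) := ⋂ q : Q,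
    {x : ℕ → I | Tendsto (fun n : ℕ => (∑ j ∈ Finset.range n, X (q : ℝ) j x) / n)
      atTop (𝓝 (q : ℝ))} with hS
  have hmeas : MeasurableSet S := by
    refine MeasurableSet.iInter fun q => ?_
    exact measurableSet_tendsto (𝓝 (q : ℝ))
      (fun n => (Finset.measurable_sum _ fun j _ => measurable_X _ j).div measurable_const)
  have hfull : μ Sᶜ = 0 := by
    have hae : ∀ᵐ x ∂μ, x ∈ S := by
      have h1 : ∀ᵐ x ∂μ, ∀ q : Q, Tendsto
          (fun n : ℕ => (∑ j ∈ Finset.range n, X (q : ℝ) j x) / n) atTop (𝓝 (q : ℝ)) := by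
        rw [ae_all_iff]
        rintro ⟨q, hq0, hq1⟩
        exact slln hμ (q : ℝ) (by exact_mod_cast hq0) (by exact_mod_cast hq1)
      filter_upwards [h1] with x hx
      exact Set.mem_iInter.mpr hx
    rw [ae_iff] at hae
    simpa [Set.compl_def] using hae
  refine ⟨S, hmeas, hfull, ?_⟩
  -- key step: on S, order relations determine the point
  have key : ∀ x ∈ S, ∀ y ∈ S, (∀ i j : ℕ, x i < x j ↔ y i < y j) →
      ∀ i : ℕ, ¬ ((x i : ℝ) < (y i : ℝ)) := by
    intro x hx y hy hord i hlt
    obtain ⟨q₁, hq₁l, hq₁r⟩ := exists_rat_btwn hlt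
    obtain ⟨q₂, hq₂l, hq₂r⟩ := exists_rat_btwn hq₁r
    -- bounds on q₁, q₂
    have hq₁0 : (0:ℝ) ≤ q₁ := le_trans (x i).2.1 (le_of_lt hq₁l)
    have hq₁1 : (q₁:ℝ) ≤ 1 := le_of_lt (lt_of_lt_of_le (lt_trans hq₂l hq₂r) (y i).2.2)
    have hq₂0 : (0:ℝ) ≤ q₂ := le_trans hq₁0 (le_of_lt hq₂l)
    have hq₂1 : (q₂:ℝ) ≤ 1 := le_of_lt (lt_of_lt_of_le hq₂r (y i).2.2)
    -- the relevant limits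
    have htx : Tendsto (fun n : ℕ => (∑ j ∈ Finset.range n, X (q₁ : ℝ) j x) / n)
        atTop (𝓝 (q₁ : ℝ)) :=
      Set.mem_iInter.mp hx ⟨q₁, by exact_mod_cast hq₁0, by exact_mod_cast hq₁1⟩
    have hty : Tendsto (fun n : ℕ => (∑ j ∈ Finset.range n, X (q₂ : ℝ) j y) / n)
        atTop (𝓝 (q₂ : ℝ)) :=
      Set.mem_iInter.mp hy ⟨q₂, by exact_mod_cast hq₂0, by exact_mod_cast hq₂1⟩
    -- pointwise comparison of the counting functions
    have hcomp : ∀ n : ℕ, (∑ j ∈ Finset.range n, X (q₂ : ℝ) j y) / n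
        ≤ (∑ j ∈ Finset.range n, X (q₁ : ℝ) j x) / n := by
      intro n
      have hsum : (∑ j ∈ Finset.range n, X (q₂ : ℝ) j y)
          ≤ ∑ j ∈ Finset.range n, X (q₁ : ℝ) j x := by
        refine Finset.sum_le_sum fun j _ => ?_
        unfold X
        split_ifs with h1 h2
        · exact le_refl 1
        · exfalso
          apply h2
          have hyj : y j < y i := Subtype.coe_lt_coe.mp (lt_trans h1 hq₂r)
          have hxj : x j < x i := (hord j i).mpr hyj
          exact lt_trans (Subtype.coe_lt_coe.mpr hxj) hq₁l
        · norm_num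
        · norm_num
      rw [div_eq_mul_inv, div_eq_mul_inv]
      exact mul_le_mul_of_nonneg_right hsum (inv_nonneg.mpr (Nat.cast_nonneg n))
    have : (q₂ : ℝ) ≤ (q₁ : ℝ) := le_of_tendsto_of_tendsto' hty htx hcomp
    exact absurd this (not_le.mpr (by exact_mod_cast hq₂l))
  intro x hx y hy hord
  funext i
  exact Subtype.ext (le_antisymm (not_lt.mp (key y hy x hx (fun i j => (hord i j).symm) i))
    (not_lt.mp (key x hx y hy hord i)))
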